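/- If X is a well-filtered T₀ space, then K(X) with the Smyth order is a dcpo (every directed family {K_d : d ∈ D}, i.e. filtered under reverse inclusion, has a supremum, namely ⋂_{d∈D} K_d, which is again a nonempty compact saturated set), and every open set of the upper Vietoris topology on K(X) is Scott open with respect to the Smyth order. -/

import Mathlib

open Set Topology TopologicalSpace

universe u v

/-- A subset of a topological space is *saturated* if it equals the intersection of the
open sets containing it. -/
def IsSat {X : Type u} [TopologicalSpace X] (A : Set X) : Prop :=
  A = ⋂₀ {U : Set X | IsOpen U ∧ A ⊆ U}

/-- The saturation `↑a` of a point `a` : the intersection of all open sets containing `a`. -/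
def satPt {X : Type u} [TopologicalSpace X] (a : X) : Set X :=
  ⋂₀ {U : Set X | IsOpen U ∧ a ∈ U}

/-- `KS X` is the collection of all nonempty compact saturated subsets of `X`. -/
def KS (X : Type u) [TopologicalSpace X] : Type u :=
  {K : Set X // K.Nonempty ∧ IsCompact K ∧ IsSat K}

/-- The *Smyth order* on `KS X` : `K ≤ L` iff `L ⊆ K` (reverse inclusion). -/
instance KS.instPartialOrder {X : Type u} [TopologicalSpace X] : PartialOrder (KS X) where
  le K L := L.1 ⊆ K.1
  le_refl K := subset_rfl
  le_trans K L M h₁ h₂ := by intro x hx; exact h₁ (h₂ hx)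
  le_antisymm K L h₁ h₂ := by exact Subtype.ext (subset_antisymm h₂ h₁)

/-- The *upper Vietoris topology* on `KS X`, generated by the sets `□U = {K | K ⊆ U}`
for `U` open in `X`.  The resulting space is the Smyth power space `P_S(X)`. -/
def upperVietoris (X : Type u) [TopologicalSpace X] : TopologicalSpace (KS X) :=
  TopologicalSpace.generateFrom
    {S : Set (KS X) | ∃ U : Set X, IsOpen U ∧ S = {K : KS X | K.1 ⊆ U}}

/-- Scott-open subsets of a preorder: upper sets inaccessible by suprema of
(nonempty) directed sets. -/
def ScottOpen {P : Type u} [Preorder P] (U : Set P) : Prop :=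
  IsUpperSet U ∧ ∀ d : Set P, d.Nonempty → DirectedOn (· ≤ ·) d →
    ∀ a : P, IsLUB d a → a ∈ U → (d ∩ U).Nonempty

/-- The Scott topology of a preorder. -/
def scottTop (P : Type u) [Preorder P] : TopologicalSpace P where
  IsOpen := ScottOpen
  isOpen_univ := ⟨isUpperSet_univ, fun d hd _ _ _ _ => by simpa using hd⟩
  isOpen_inter := by
    rintro U V ⟨hUu, hUd⟩ ⟨hVu, hVd⟩
    refine ⟨hUu.inter hVu, fun d hd hdir a ha haUV => ?_⟩
    obtain ⟨x, hxd, hxU⟩ := hUd d hd hdir a ha haUV.1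
    obtain ⟨y, hyd, hyV⟩ := hVd d hd hdir a ha haUV.2
    obtain ⟨z, hzd, hxz, hyz⟩ := hdir x hxd y hyd
    exact ⟨z, hzd, hUu hxz hxU, hVu hyz hyV⟩
  isOpen_sUnion := by
    intro S hS
    refine ⟨isUpperSet_sUnion fun s hs => (hS s hs).1, fun d hd hdir a ha haU => ?_⟩
    obtain ⟨t, htS, hat⟩ := haU
    obtain ⟨x, hxd, hxt⟩ := (hS t htS).2 d hd hdir a ha hat
    exact ⟨x, hxd, t, htS, hxt⟩

/-- A topological space is *well-filtered* if for every nonempty family of nonempty compact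
saturated sets which is filtered under reverse inclusion and every open `U` containing the
intersection of the family, some member of the family is contained in `U`. -/
def WellFiltered (X : Type u) [TopologicalSpace X] : Prop :=
  ∀ 𝒦 : Set (Set X), 𝒦.Nonempty →
    (∀ K ∈ 𝒦, K.Nonempty ∧ IsCompact K ∧ IsSat K) →
    (∀ K₁ ∈ 𝒦, ∀ K₂ ∈ 𝒦, ∃ K₃ ∈ 𝒦, K₃ ⊆ K₁ ∧ K₃ ⊆ K₂) →
    ∀ U : Set X, IsOpen U → ⋂₀ 𝒦 ⊆ U → ∃ K ∈ 𝒦, K ⊆ U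

/-- The specialization order of a topological space: `x ≤ y` iff `x ∈ cl {y}`. -/
def specLE {X : Type u} [TopologicalSpace X] (x y : X) : Prop := x ∈ closure {y}

/-- Least upper bound with respect to an explicit relation. -/
def RelLUB {P : Type u} (r : P → P → Prop) (d : Set P) (a : P) : Prop :=
  (∀ x ∈ d, r x a) ∧ ∀ b : P, (∀ x ∈ d, r x b) → r a b

/-- Scott openness with respect to an explicit relation. -/
def RelScottOpen {P : Type u} (r : P → P → Prop) (U : Set P) : Prop :=
  (∀ ⦃x y : P⦄, x ∈ U → r x y → y ∈ U) ∧
  ∀ d : Set P, d.Nonempty → DirectedOn r d → ∀ a : P, RelLUB r d a → a ∈ U → (d ∩ U).Nonempty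

/-- A `d`-space (monotone convergence space): the specialization order is directed complete
and every open set is Scott open with respect to the specialization order. -/
def DSpace (X : Type u) [TopologicalSpace X] : Prop :=
  (∀ d : Set X, d.Nonempty → DirectedOn specLE d → ∃ a : X, RelLUB specLE d a) ∧
  ∀ U : Set X, IsOpen U → RelScottOpen specLE U

/-- A space is *sober* if every irreducible closed set is the closure of a unique point. -/
def SoberSp (Z : Type u) [TopologicalSpace Z] : Prop :=
  ∀ A : Set Z, IsClosed A → IsIrreducible A → ∃! z : Z, A = closure {z}

/-- A closed set `A` is a *Rudin set* if there is a (nonempty) family of nonempty compact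
saturated sets, filtered under reverse inclusion, such that `A` is a minimal closed set
meeting every member of the family. -/
def RudinSet {X : Type u} [TopologicalSpace X] (A : Set X) : Prop :=
  IsClosed A ∧
  ∃ 𝒦 : Set (Set X), 𝒦.Nonempty ∧
    (∀ K ∈ 𝒦, K.Nonempty ∧ IsCompact K ∧ IsSat K) ∧
    (∀ K₁ ∈ 𝒦, ∀ K₂ ∈ 𝒦, ∃ K₃ ∈ 𝒦, K₃ ⊆ K₁ ∧ K₃ ⊆ K₂) ∧
    (∀ K ∈ 𝒦, (A ∩ K).Nonempty) ∧
    (∀ B : Set X, IsClosed B → (∀ K ∈ 𝒦, (B ∩ K).Nonempty) → B ⊆ A → B = A)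

/-- A *Rudin space*: every irreducible closed subset is a Rudin set. -/
def RudinSpace (X : Type u) [TopologicalSpace X] : Prop :=
  ∀ A : Set X, IsClosed A → IsIrreducible A → RudinSet A

/-- A closed set `A` is *well-filtered determined* (WD) if every continuous map into a
well-filtered T₀ space sends it to a set whose closure is a point closure. -/
def WDSet {X : Type u} [TopologicalSpace X] (A : Set X) : Prop :=
  ∀ (Y : Type v) [TopologicalSpace Y] [T0Space Y], WellFiltered Y →
    ∀ f : X → Y, Continuous f → ∃ y : Y, closure (f '' A) = closure {y}

/-- A *well-filtered determined (WD) space*: every irreducible closed subset is WD. -/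
def WDSpace (X : Type u) [TopologicalSpace X] : Prop :=
  ∀ A : Set X, IsClosed A → IsIrreducible A → WDSet.{u, v} A

/-- Property S: for every irreducible closed set `A`, the family `{↑a : a ∈ A}` is an
irreducible subset of the Scott power space `Σ K(X)`, or
`◇A = {K ∈ K(X) : K ∩ A ≠ ∅}` is an irreducible closed subset of `Σ K(X)`. -/
def PropertyS (X : Type u) [TopologicalSpace X] : Prop :=
  ∀ A : Set X, IsClosed A → IsIrreducible A →
    @IsIrreducible (KS X) (scottTop (KS X)) {K : KS X | ∃ a ∈ A, K.1 = satPt a} ∨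
    (@IsClosed (KS X) (scottTop (KS X)) {K : KS X | (K.1 ∩ A).Nonempty} ∧
      @IsIrreducible (KS X) (scottTop (KS X)) {K : KS X | (K.1 ∩ A).Nonempty})

/-- The order of Jia's dcpo on `ℕ × ℕ × (ℕ ∪ {∞})`:
`(i₁,j₁,k₁) ≤ (i₂,j₂,k₂)` iff (`i₁ = i₂`, `j₁ = j₂` and `k₁ ≤ k₂`) or
(`i₂ = i₁ + 1`, `k₁ ≤ j₂` and `k₂ = ∞`). -/
def LJiaLE (a b : ℕ × ℕ × WithTop ℕ) : Prop :=
  (a.1 = b.1 ∧ a.2.1 = b.2.1 ∧ a.2.2 ≤ b.2.2) ∨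
  (b.1 = a.1 + 1 ∧ a.2.2 ≤ (b.2.1 : WithTop ℕ) ∧ b.2.2 = ⊤)

/-- If `X` is a well-filtered `T₀` space, then `K(X)` with the Smyth order is a
dcpo — every nonempty family directed in the Smyth order (i.e. filtered under reverse inclusion)
has a supremum, namely its intersection, which is again a nonempty compact saturated set — and
every upper-Vietoris-open subset of `K(X)` is Scott open. -/
theorem stmt1 {X : Type u} [TopologicalSpace X] [T0Space X] (hwf : WellFiltered X) :
    (∀ 𝒦 : Set (KS X), 𝒦.Nonempty → DirectedOn (· ≤ ·) 𝒦 →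
      ∃ S : KS X, S.1 = (⋂ K ∈ 𝒦, K.1) ∧ IsLUB 𝒦 S) ∧
    (∀ U : Set (KS X), @IsOpen (KS X) (upperVietoris X) U → ScottOpen U) := by
  have key : ∀ 𝒦 : Set (KS X), 𝒦.Nonempty → DirectedOn (· ≤ ·) 𝒦 →
      ∀ U : Set X, IsOpen U → (⋂ K ∈ 𝒦, K.1) ⊆ U → ∃ K ∈ 𝒦, K.1 ⊆ U := by
    intro 𝒦 hne hdir U hU hsub
    have h := hwf (Subtype.val '' 𝒦) (hne.image _)
      (by rintro K ⟨k, hk, rfl⟩; exact k.2)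
      (by
        rintro K₁ ⟨k₁, hk₁, rfl⟩ K₂ ⟨k₂, hk₂, rfl⟩
        obtain ⟨k₃, hk₃, h1, h2⟩ := hdir k₁ hk₁ k₂ hk₂
        exact ⟨k₃.1, ⟨k₃, hk₃, rfl⟩, h1, h2⟩)
      U hU (by intro x hx; exact hsub (Set.mem_iInter₂.2 fun K hK => hx _ ⟨K, hK, rfl⟩))
    obtain ⟨K, ⟨k, hk, rfl⟩, hKU⟩ := h
    exact ⟨k, hk, hKU⟩
  have part1 : ∀ 𝒦 : Set (KS X), 𝒦.Nonempty → DirectedOn (· ≤ ·) 𝒦 →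
      ∃ S : KS X, S.1 = (⋂ K ∈ 𝒦, K.1) ∧ IsLUB 𝒦 S := by
    intro 𝒦 hne hdir
    set S : Set X := ⋂ K ∈ 𝒦, K.1 with hSdef
    have hSne : S.Nonempty := by
      by_contra h
      rw [Set.not_nonempty_iff_eq_empty] at h
      obtain ⟨K, hK, hKU⟩ := key 𝒦 hne hdir ∅ isOpen_empty (h ▸ subset_rfl)
      exact (Set.not_nonempty_empty) (Set.Nonempty.mono hKU K.2.1)
    have hScomp : IsCompact S := by
      apply isCompact_of_finite_subcover
      intro ι Us hUs hcov
      obtain ⟨K, hK, hKU⟩ := key 𝒦 hne hdir (⋃ i, Us i) (isOpen_iUnion hUs) hcov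
      obtain ⟨t, ht⟩ := K.2.2.1.elim_finite_subcover Us hUs hKU
      exact ⟨t, (Set.biInter_subset_of_mem hK).trans ht⟩
    have hSsat : IsSat S := by
      apply subset_antisymm
      · intro x hx V hV
        exact hV.2 hx
      · intro x hx
        refine Set.mem_iInter₂.2 fun K hK => ?_
        have hKeq := K.2.2.2
        rw [hKeq]
        intro V hV
        exact hx V ⟨hV.1, fun y hy => hV.2 ((Set.biInter_subset_of_mem hK) hy)⟩
    refine ⟨⟨S, hSne, hScomp, hSsat⟩, rfl, ?_, ?_⟩
    · intro K hK
      exact Set.biInter_subset_of_mem hK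
    · intro b hb
      intro x hx
      exact Set.mem_iInter₂.2 fun K hK => hb hK hx
  refine ⟨part1, ?_⟩
  intro U hU
  have hle : scottTop (KS X) ≤ upperVietoris X := by
    apply le_generateFrom
    rintro s ⟨V, hV, rfl⟩
    constructor
    · intro a b hab ha
      exact Set.Subset.trans hab ha
    · intro d hd hdir a ha haV
      obtain ⟨S', hS'eq, hS'lub⟩ := part1 d hd hdir
      have hEq : a = S' := ha.unique hS'lub
      obtain ⟨K, hK, hKV⟩ := key d hd hdir V hV (by
        rw [← hS'eq, ← hEq]; exact haV)
      exact ⟨K, hK, hKV⟩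
  exact hle U hU
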